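/- Hardy–Littlewood rearrangement inequality: for any two measurable functions f and g on (E, μ), ∫_E |f(x) g(x)| dμ(x) ≤ ∫_0^∞ f*(s) g*(s) ds. -/

import Mathlib

open MeasureTheory Set ENNReal Filter

noncomputable section

/-- The distribution function `μ_f(λ) = μ {x : |f x| > λ}`. -/
def distrib {E : Type*} [MeasurableSpace E] (μ : Measure E) (f : E → ℂ) (lam : ℝ≥0∞) : ℝ≥0∞ :=
  μ {x | lam < (‖f x‖₊ : ℝ≥0∞)}

/-- The non-increasing rearrangement `f*(t) = inf {λ ≥ 0 : μ_f(λ) ≤ t}`. -/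
def rearr {E : Type*} [MeasurableSpace E] (μ : Measure E) (f : E → ℂ) (t : ℝ≥0∞) : ℝ≥0∞ :=
  sInf {lam : ℝ≥0∞ | distrib μ f lam ≤ t}

section Aux
variable {E : Type*} [MeasurableSpace E] (μ : Measure E)

lemma distrib_antitone (f : E → ℂ) : Antitone (distrib μ f) := fun _ _ hab =>
  measure_mono fun _ hx => lt_of_le_of_lt hab hx

lemma lt_rearr_iff (f : E → ℂ) (s u : ℝ≥0∞) :
    s < rearr μ f u ↔ u < distrib μ f s := by
  constructor
  · intro h
    by_contra hc
    push_neg at hc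
    exact absurd (sInf_le (show s ∈ {lam | distrib μ f lam ≤ u} from hc)) (not_le.2 h)
  · intro h
    rcases eq_or_ne s ∞ with hs | hs
    · exfalso
      have : distrib μ f s = 0 := by
        have : {x | s < (‖f x‖₊ : ℝ≥0∞)} = ∅ := by
          ext x; simp [hs]
        simp [distrib, this]
      rw [this] at h
      exact (not_lt.2 (zero_le : (0:ℝ≥0∞) ≤ u)) h
    · have hmono : Monotone (fun n : ℕ => {x | s + ((n : ℝ≥0∞) + 1)⁻¹ < (‖f x‖₊ : ℝ≥0∞)}) := by
        intro m n hmn x hx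
        refine lt_of_le_of_lt (add_le_add_right ?_ s) hx
        exact ENNReal.inv_le_inv.2 (by exact_mod_cast add_le_add_left (Nat.cast_le.2 hmn) 1)
      have hunion : (⋃ n : ℕ, {x | s + ((n : ℝ≥0∞) + 1)⁻¹ < (‖f x‖₊ : ℝ≥0∞)})
          = {x | s < (‖f x‖₊ : ℝ≥0∞)} := by
        ext x
        simp only [mem_iUnion, mem_setOf_eq]
        constructor
        · rintro ⟨n, hn⟩
          exact lt_of_le_of_lt (le_add_right le_rfl) hn
        · intro hx
          have hsub : (‖f x‖₊ : ℝ≥0∞) - s ≠ 0 := by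
            simpa [tsub_eq_zero_iff_le] using not_le.2 hx
          obtain ⟨n, hn⟩ := ENNReal.exists_inv_nat_lt hsub
          refine ⟨n, ?_⟩
          have h1 : ((n : ℝ≥0∞) + 1)⁻¹ < (‖f x‖₊ : ℝ≥0∞) - s :=
            lt_of_le_of_lt (ENNReal.inv_le_inv.2 (le_add_right le_rfl)) hn
          calc s + ((n : ℝ≥0∞) + 1)⁻¹ < s + ((‖f x‖₊ : ℝ≥0∞) - s) :=
                ENNReal.add_lt_add_left hs h1
            _ = (‖f x‖₊ : ℝ≥0∞) := add_tsub_cancel_of_le hx.le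
      have hsup : distrib μ f s = ⨆ n : ℕ, distrib μ f (s + ((n : ℝ≥0∞) + 1)⁻¹) := by
        rw [distrib, ← hunion, Directed.measure_iUnion hmono.directed_le]
        rfl
      rw [hsup] at h
      obtain ⟨n, hn⟩ := lt_iSup_iff.1 h
      have hlt : s < s + ((n : ℝ≥0∞) + 1)⁻¹ :=
        ENNReal.lt_add_right hs (by simp)
      refine lt_of_lt_of_le hlt (le_sInf fun ν hν => ?_)
      by_contra hcon
      push_neg at hcon
      exact absurd (le_trans (distrib_antitone μ f hcon.le) hν) (not_le.2 hn)

lemma lintegral_ind_lt (a : ℝ≥0∞) :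
    ∫⁻ s in Ioi (0:ℝ), {s : ℝ | ENNReal.ofReal s < a}.indicator (fun _ => (1:ℝ≥0∞)) s = a := by
  have hmeas : MeasurableSet {s : ℝ | ENNReal.ofReal s < a} :=
    measurableSet_lt ENNReal.measurable_ofReal measurable_const
  rw [lintegral_indicator hmeas, setLIntegral_one, Measure.restrict_apply hmeas]
  rcases eq_or_ne a ∞ with ha | ha
  · have : {s : ℝ | ENNReal.ofReal s < a} = univ := by
      ext s; simp [ha, ofReal_lt_top]
    rw [this, univ_inter, Real.volume_Ioi]
    exact ha.symm
  · have : {s : ℝ | ENNReal.ofReal s < a} ∩ Ioi 0 = Ioo 0 a.toReal := by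
      ext s
      simp only [mem_inter_iff, mem_setOf_eq, mem_Ioi, mem_Ioo]
      constructor
      · rintro ⟨h1, h2⟩
        exact ⟨h2, (ENNReal.ofReal_lt_iff_lt_toReal h2.le ha).1 h1⟩
      · rintro ⟨h1, h2⟩
        exact ⟨(ENNReal.ofReal_lt_iff_lt_toReal h1.le ha).2 h2, h1⟩
    rw [this, Real.volume_Ioo, sub_zero, ENNReal.ofReal_toReal ha]

lemma lintegral_ind_min (a b : ℝ≥0∞) :
    ∫⁻ u in Ioi (0:ℝ), ({u : ℝ | ENNReal.ofReal u < a}.indicator (fun _ => (1:ℝ≥0∞)) u) *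
      ({u : ℝ | ENNReal.ofReal u < b}.indicator (fun _ => (1:ℝ≥0∞)) u) = min a b := by
  have key : ∀ u : ℝ, ({u : ℝ | ENNReal.ofReal u < a}.indicator (fun _ => (1:ℝ≥0∞)) u) *
      ({u : ℝ | ENNReal.ofReal u < b}.indicator (fun _ => (1:ℝ≥0∞)) u)
      = {u : ℝ | ENNReal.ofReal u < min a b}.indicator (fun _ => (1:ℝ≥0∞)) u := by
    intro u
    by_cases h1 : ENNReal.ofReal u < a <;> by_cases h2 : ENNReal.ofReal u < b <;>
      simp [Set.indicator_apply, h1, h2, lt_min_iff]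
  simp_rw [key]
  exact lintegral_ind_lt (min a b)

end Aux

/-- **Hardy–Littlewood rearrangement inequality**: for measurable functions `f, g`
on a non-atomic σ-finite measure space `(E, μ)`,
`∫_E |f x * g x| dμ(x) ≤ ∫_0^∞ f*(s) g*(s) ds`. -/
theorem hardy_littlewood_rearrangement {E : Type*} [MeasurableSpace E] (μ : Measure E)
    [SigmaFinite μ] [NullSingletonClass μ] (f g : E → ℂ) (hf : Measurable f) (hg : Measurable g) :
    ∫⁻ x, (‖f x‖₊ : ℝ≥0∞) * (‖g x‖₊ : ℝ≥0∞) ∂μ ≤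
      ∫⁻ s in Ioi (0 : ℝ), rearr μ f (ENNReal.ofReal s) * rearr μ g (ENNReal.ofReal s) := by
  classical
  -- superlevel sets
  set A : ℝ → Set E := fun s => {x | ENNReal.ofReal s < (‖f x‖₊ : ℝ≥0∞)} with hA
  set B : ℝ → Set E := fun t => {x | ENNReal.ofReal t < (‖g x‖₊ : ℝ≥0∞)} with hB
  have hAmeas : ∀ s, MeasurableSet (A s) := fun s =>
    measurableSet_lt measurable_const hf.enorm
  have hBmeas : ∀ t, MeasurableSet (B t) := fun t =>
    measurableSet_lt measurable_const hg.enorm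
  -- set identifications with real-norm superlevel sets
  have hAeq : ∀ s : ℝ, 0 ≤ s → {x | s < ‖f x‖} = A s := by
    intro s hs
    ext x
    simp only [hA, mem_setOf_eq, ← enorm_eq_nnnorm, ← ofReal_norm]
    exact (ENNReal.ofReal_lt_ofReal_iff_of_nonneg hs).symm
  have hBeq : ∀ t : ℝ, 0 ≤ t → {x | t < ‖g x‖} = B t := by
    intro t ht
    ext x
    simp only [hB, mem_setOf_eq, ← enorm_eq_nnnorm, ← ofReal_norm]
    exact (ENNReal.ofReal_lt_ofReal_iff_of_nonneg ht).symm
  -- Step 1 : layer cake twice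
  have step1 : ∫⁻ x, (‖f x‖₊ : ℝ≥0∞) * (‖g x‖₊ : ℝ≥0∞) ∂μ
      = ∫⁻ s in Ioi (0:ℝ), ∫⁻ t in Ioi (0:ℝ), μ (B t ∩ A s) := by
    have h1 : ∫⁻ x, (‖f x‖₊ : ℝ≥0∞) * (‖g x‖₊ : ℝ≥0∞) ∂μ
        = ∫⁻ x, (‖f x‖₊ : ℝ≥0∞) ∂(μ.withDensity fun x => (‖g x‖₊ : ℝ≥0∞)) := by
      rw [lintegral_withDensity_eq_lintegral_mul μ (f := fun x => (‖g x‖₊ : ℝ≥0∞)) hg.enorm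
        (g := fun x => (‖f x‖₊ : ℝ≥0∞)) hf.enorm]
      simp_rw [Pi.mul_apply, mul_comm]
    rw [h1]
    have h2 : ∫⁻ x, (‖f x‖₊ : ℝ≥0∞) ∂(μ.withDensity fun x => (‖g x‖₊ : ℝ≥0∞))
        = ∫⁻ s in Ioi (0:ℝ), (μ.withDensity fun x => (‖g x‖₊ : ℝ≥0∞)) {x | s < ‖f x‖} := by
      simp_rw [← enorm_eq_nnnorm, ← ofReal_norm]
      exact lintegral_eq_lintegral_meas_lt _ (Eventually.of_forall fun x => norm_nonneg _)
        (hf.norm.aemeasurable)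
    rw [h2]
    refine setLIntegral_congr_fun measurableSet_Ioi (fun s hs => ?_)
    rw [hAeq s (le_of_lt hs), withDensity_apply _ (hAmeas s)]
    have h3 : ∫⁻ x in A s, (‖g x‖₊ : ℝ≥0∞) ∂μ
        = ∫⁻ t in Ioi (0:ℝ), (μ.restrict (A s)) {x | t < ‖g x‖} := by
      simp_rw [← enorm_eq_nnnorm, ← ofReal_norm]
      exact lintegral_eq_lintegral_meas_lt _ (Eventually.of_forall fun x => norm_nonneg _)
        (hg.norm.aemeasurable)
    rw [h3]
    refine setLIntegral_congr_fun measurableSet_Ioi (fun t ht => ?_)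
    rw [hBeq t (le_of_lt ht), Measure.restrict_apply (hBmeas t)]
  rw [step1]
  -- Step 2 : bound by min of distribution functions
  have step2 : ∫⁻ s in Ioi (0:ℝ), ∫⁻ t in Ioi (0:ℝ), μ (B t ∩ A s)
      ≤ ∫⁻ s in Ioi (0:ℝ), ∫⁻ t in Ioi (0:ℝ),
        min (distrib μ f (ENNReal.ofReal s)) (distrib μ g (ENNReal.ofReal t)) := by
    refine lintegral_mono fun s => lintegral_mono fun t => ?_
    exact le_min (measure_mono inter_subset_right) (measure_mono inter_subset_left)
  refine le_trans step2 (le_of_eq ?_)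
  -- Step 3 : the min-integral equals the rearrangement integral
  -- measurability facts
  have hmof : Monotone (fun s : ℝ => ENNReal.ofReal s) := fun _ _ h => ENNReal.ofReal_le_ofReal h
  have hmdf : Measurable (fun s : ℝ => distrib μ f (ENNReal.ofReal s)) :=
    ((distrib_antitone μ f).comp_monotone hmof).measurable
  have hmdg : Measurable (fun t : ℝ => distrib μ g (ENNReal.ofReal t)) :=
    ((distrib_antitone μ g).comp_monotone hmof).measurable
  have hrg_anti : Antitone (rearr μ g) := fun _ _ hab =>
    sInf_le_sInf fun _ hl => le_trans hl hab
  have hmrg : Measurable (fun u : ℝ => rearr μ g (ENNReal.ofReal u)) :=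
    (hrg_anti.comp_monotone hmof).measurable
  -- indicator notation
  set P : ℝ → ℝ → ℝ≥0∞ := fun s u =>
    {u : ℝ | ENNReal.ofReal u < distrib μ f (ENNReal.ofReal s)}.indicator (fun _ => 1) u with hP
  set Q : ℝ → ℝ → ℝ≥0∞ := fun t u =>
    {u : ℝ | ENNReal.ofReal u < distrib μ g (ENNReal.ofReal t)}.indicator (fun _ => 1) u with hQ
  have hPunc : Measurable (fun p : ℝ × ℝ => P p.1 p.2) := by
    have : (fun p : ℝ × ℝ => P p.1 p.2) =
        ({p : ℝ × ℝ | ENNReal.ofReal p.2 < distrib μ f (ENNReal.ofReal p.1)}.indicator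
          (fun _ => 1)) := by
      funext p
      simp [hP, Set.indicator_apply]
    rw [this]
    exact Measurable.indicator measurable_const
      (measurableSet_lt (ENNReal.measurable_ofReal.comp measurable_snd)
        (hmdf.comp measurable_fst))
  have hQunc : Measurable (fun p : ℝ × ℝ => Q p.1 p.2) := by
    have : (fun p : ℝ × ℝ => Q p.1 p.2) =
        ({p : ℝ × ℝ | ENNReal.ofReal p.2 < distrib μ g (ENNReal.ofReal p.1)}.indicator
          (fun _ => 1)) := by
      funext p
      simp [hQ, Set.indicator_apply]
    rw [this]
    exact Measurable.indicator measurable_const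
      (measurableSet_lt (ENNReal.measurable_ofReal.comp measurable_snd)
        (hmdg.comp measurable_fst))
  have hPne : ∀ s u, P s u ≠ ∞ := by
    intro s u
    by_cases h : ENNReal.ofReal u < distrib μ f (ENNReal.ofReal s) <;>
      simp [hP, Set.indicator_apply, h]
  -- rewrite min via indicators
  have hmin : ∀ s t : ℝ,
      min (distrib μ f (ENNReal.ofReal s)) (distrib μ g (ENNReal.ofReal t))
        = ∫⁻ u in Ioi (0:ℝ), P s u * Q t u :=
    fun s t => (lintegral_ind_min _ _).symm
  calc ∫⁻ s in Ioi (0:ℝ), ∫⁻ t in Ioi (0:ℝ),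
        min (distrib μ f (ENNReal.ofReal s)) (distrib μ g (ENNReal.ofReal t))
      = ∫⁻ s in Ioi (0:ℝ), ∫⁻ u in Ioi (0:ℝ), P s u * rearr μ g (ENNReal.ofReal u) := by
        refine lintegral_congr fun s => ?_
        simp_rw [hmin s]
        rw [lintegral_lintegral_swap]
        · refine lintegral_congr fun u => ?_
          rw [lintegral_const_mul' (P s u) _ (hPne s u)]
          congr 1
          have : ∀ t : ℝ, Q t u =
              {t : ℝ | ENNReal.ofReal t < rearr μ g (ENNReal.ofReal u)}.indicator
                (fun _ => 1) t := by
            intro t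
            simp only [hQ, Set.indicator_apply, mem_setOf_eq, lt_rearr_iff]
          simp_rw [this]
          exact lintegral_ind_lt _
        · exact ((hPunc.comp (measurable_const.prodMk measurable_snd)).mul
            (hQunc.comp (measurable_fst.prodMk measurable_snd))).aemeasurable
    _ = ∫⁻ u in Ioi (0:ℝ), ∫⁻ s in Ioi (0:ℝ), P s u * rearr μ g (ENNReal.ofReal u) := by
        rw [lintegral_lintegral_swap]
        exact (hPunc.mul (hmrg.comp measurable_snd)).aemeasurable
    _ = ∫⁻ u in Ioi (0:ℝ), rearr μ f (ENNReal.ofReal u) * rearr μ g (ENNReal.ofReal u) := by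
        refine lintegral_congr fun u => ?_
        have hPr : ∀ s : ℝ, P s u =
            {s : ℝ | ENNReal.ofReal s < rearr μ f (ENNReal.ofReal u)}.indicator
              (fun _ => 1) s := by
          intro s
          simp only [hP, Set.indicator_apply, mem_setOf_eq, lt_rearr_iff]
        simp_rw [hPr]
        rw [lintegral_mul_const _ (Measurable.indicator measurable_const
          (measurableSet_lt ENNReal.measurable_ofReal measurable_const)), lintegral_ind_lt]
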